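/- With F the Koszul complex on x,y as above over a ring where (x,y) is a regular sequence (e.g. R = ℚ[x,y]), the complex Λ²F (R² ← R⁴ ← R² with the matrices D₂, D₃) is exact at the middle term, i.e., ker D₂ = im D₃, when 2 is invertible in R. -/

import Mathlib

open MvPolynomial

noncomputable abbrev R4 : Type := MvPolynomial (Fin 2) ℚ

lemma aux_x_not_dvd_y : ¬ (X 0 : R4) ∣ X 1 := by
  rintro ⟨t, ht⟩
  have := congrArg (MvPolynomial.eval ![0, 1]) ht
  simp at this

lemma aux_prime_x : Prime (X 0 : R4) := by
  rw [← MulEquiv.prime_iff (finSuccEquiv ℚ 1).toRingEquiv.toMulEquiv]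
  rw [show (finSuccEquiv ℚ 1).toRingEquiv.toMulEquiv (X 0 : R4) = Polynomial.X from
    finSuccEquiv_X_zero]
  exact Polynomial.prime_X

theorem exterior_square_koszul_exact_middle :
    letI x : R4 := X 0
    letI y : R4 := X 1
    letI D2 : Matrix (Fin 2) (Fin 4) R4 := !![y, x, 0, x; 0, y, x, -y]
    letI D3 : Matrix (Fin 4) (Fin 2) R4 := !![2 * x, 0; -y, x; 0, -2 * y; -y, -x]
    LinearMap.ker D2.mulVecLin = LinearMap.range D3.mulVecLin := by
  show LinearMap.ker (Matrix.mulVecLin !![X 1, X 0, 0, X 0; 0, X 1, X 0, -X 1]) = LinearMap.range (Matrix.mulVecLin !![2 * X 0, 0; -X 1, X 0; 0, -2 * X 1; -X 1, -X 0])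
  have hx : Prime (X 0 : R4) := aux_prime_x
  have hx0 : (X 0 : R4) ≠ 0 := hx.ne_zero
  have hh : (C (2⁻¹ : ℚ) * 2 : R4) = 1 := by
    rw [show (2 : R4) = C (2:ℚ) from (map_ofNat C 2).symm, ← C_mul]; norm_num
  apply le_antisymm
  · intro v hv
    rw [LinearMap.mem_ker] at hv
    have h0 := congrFun hv 0
    have h1 := congrFun hv 1
    simp [Matrix.mulVecLin_apply, Matrix.mulVec, dotProduct,
      Fin.sum_univ_four] at h0 h1
    have hdvd0 : (X 0 : R4) ∣ X 1 * v 0 := ⟨-(v 1 + v 3), by linear_combination h0⟩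
    have ha : (X 0 : R4) ∣ v 0 := (hx.dvd_mul.mp hdvd0).resolve_left aux_x_not_dvd_y
    obtain ⟨a, ha⟩ := ha
    have hdvd1 : (X 0 : R4) ∣ X 1 * (v 1 - v 3) := ⟨-(v 2), by linear_combination h1⟩
    have hc : (X 0 : R4) ∣ (v 1 - v 3) := (hx.dvd_mul.mp hdvd1).resolve_left aux_x_not_dvd_y
    obtain ⟨c, hc⟩ := hc
    have hsum : v 1 + v 3 = -(X 1 * a) := by
      apply mul_left_cancel₀ hx0
      linear_combination h0 - X 1 * ha
    have hv2 : v 2 = -(X 1 * c) := by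
      apply mul_left_cancel₀ hx0
      linear_combination h1 - X 1 * hc
    refine ⟨![C (2⁻¹ : ℚ) * a, C (2⁻¹ : ℚ) * c], ?_⟩
    funext i
    fin_cases i
    · simp (config := { failIfUnchanged := false }) [Matrix.mulVecLin_apply, Matrix.mulVec,
        dotProduct, Fin.sum_univ_two]
      linear_combination (X 0 * a) * hh - ha
    · simp (config := { failIfUnchanged := false }) [Matrix.mulVecLin_apply, Matrix.mulVec,
        dotProduct, Fin.sum_univ_two]
      linear_combination (-(C (2⁻¹ : ℚ))) * hsum + (-(C (2⁻¹ : ℚ))) * hc + v 1 * hh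
    · simp (config := { failIfUnchanged := false }) [Matrix.mulVecLin_apply, Matrix.mulVec,
        dotProduct, Fin.sum_univ_two]
      linear_combination -hv2 - (X 1 * c) * hh
    · simp (config := { failIfUnchanged := false }) [Matrix.mulVecLin_apply, Matrix.mulVec,
        dotProduct, Fin.sum_univ_two]
      linear_combination (-(C (2⁻¹ : ℚ))) * hsum + (C (2⁻¹ : ℚ)) * hc + v 3 * hh
  · rintro v ⟨w, rfl⟩
    rw [LinearMap.mem_ker]
    funext i
    fin_cases i <;>
      · simp [Matrix.mulVecLin_apply, Matrix.mulVec, dotProduct,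
          Fin.sum_univ_four, Fin.sum_univ_two]
        ring
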